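/- The set {(x, y) : 0 ≤ x, y, x + y = min(l₁,l₂) − 1} is a strongly cancellative set of size min(l₁, l₂) in the lattice D_{l₁,l₂}, and moreover any two distinct elements of this set are incomparable. -/
import Mathlib

open Finset

/-- `C` is a strongly cancellative set in the lattice `α`. -/
def IsStronglyCancellative {α : Type*} [Lattice α] (C : Finset α) : Prop :=
  ∀ a1 ∈ C, ∀ a2 ∈ C, ∀ a3 ∈ C, a1 ≠ a2 → a1 ≠ a3 → a2 ≠ a3 →
    a1 ⊓ a2 ≠ a1 ⊓ a3 ∧ a1 ⊔ a2 ≠ a1 ⊔ a3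

theorem antidiagonal_strongly_cancellative {l₁ l₂ : ℕ} (hl₁ : 1 ≤ l₁) (hl₂ : 1 ≤ l₂) :
    let C : Finset (Fin l₁ × Fin l₂) :=
      univ.filter (fun p => (p.1 : ℕ) + (p.2 : ℕ) = min l₁ l₂ - 1)
    IsStronglyCancellative C ∧ C.card = min l₁ l₂ ∧
      ∀ a ∈ C, ∀ b ∈ C, a ≠ b → ¬ a ≤ b := by
  intro C
  have hmem : ∀ p : Fin l₁ × Fin l₂, p ∈ C ↔ (p.1 : ℕ) + (p.2 : ℕ) = min l₁ l₂ - 1 := by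
    intro p; simp [C]
  have hval : ∀ a b : Fin l₁ × Fin l₂, a = b ↔ (a.1 : ℕ) = b.1 ∧ (a.2 : ℕ) = b.2 := by
    intro a b
    constructor
    · rintro rfl; exact ⟨rfl, rfl⟩
    · rintro ⟨h1, h2⟩
      exact Prod.ext (Fin.ext h1) (Fin.ext h2)
  have hinf : ∀ a b : Fin l₁ × Fin l₂,
      ((a ⊓ b).1 : ℕ) = min (a.1 : ℕ) (b.1 : ℕ) ∧ ((a ⊓ b).2 : ℕ) = min (a.2 : ℕ) (b.2 : ℕ) := by
    have key : ∀ {n : ℕ} (x y : Fin n), ((x ⊓ y : Fin n) : ℕ) = min (x : ℕ) (y : ℕ) := by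
      intro n x y
      rcases le_total x y with h | h
      · rw [inf_eq_left.2 h, min_eq_left (Fin.le_def.1 h)]
      · rw [inf_eq_right.2 h, min_eq_right (Fin.le_def.1 h)]
    intro a b
    exact ⟨key a.1 b.1, key a.2 b.2⟩
  have hsup : ∀ a b : Fin l₁ × Fin l₂,
      ((a ⊔ b).1 : ℕ) = max (a.1 : ℕ) (b.1 : ℕ) ∧ ((a ⊔ b).2 : ℕ) = max (a.2 : ℕ) (b.2 : ℕ) := by
    have key : ∀ {n : ℕ} (x y : Fin n), ((x ⊔ y : Fin n) : ℕ) = max (x : ℕ) (y : ℕ) := by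
      intro n x y
      rcases le_total x y with h | h
      · rw [sup_eq_right.2 h, max_eq_right (Fin.le_def.1 h)]
      · rw [sup_eq_left.2 h, max_eq_left (Fin.le_def.1 h)]
    intro a b
    exact ⟨key a.1 b.1, key a.2 b.2⟩
  refine ⟨?_, ?_, ?_⟩
  · intro a1 h1 a2 h2 a3 h3 h12 h13 h23
    rw [hmem] at h1 h2 h3
    constructor
    · intro h
      rw [hval] at h
      obtain ⟨e1, e2⟩ := h
      rw [(hinf a1 a2).1, (hinf a1 a3).1] at e1
      rw [(hinf a1 a2).2, (hinf a1 a3).2] at e2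
      exact h23 ((hval a2 a3).2 (by omega))
    · intro h
      rw [hval] at h
      obtain ⟨e1, e2⟩ := h
      rw [(hsup a1 a2).1, (hsup a1 a3).1] at e1
      rw [(hsup a1 a2).2, (hsup a1 a3).2] at e2
      exact h23 ((hval a2 a3).2 (by omega))
  · have := Finset.card_bij' (s := C) (t := range (min l₁ l₂))
      (i := fun p _ => (p.1 : ℕ))
      (j := fun i hi => (⟨i, lt_of_lt_of_le (mem_range.mp hi) (min_le_left l₁ l₂)⟩,
        ⟨min l₁ l₂ - 1 - i, by
          have := mem_range.mp hi; omega⟩))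
      (by
        intro p hp
        rw [hmem] at hp
        rw [mem_range]
        show (p.1 : ℕ) < min l₁ l₂
        omega)
      (by
        intro i hi
        rw [hmem]
        have := mem_range.mp hi
        simp; omega)
      (by
        intro p hp
        rw [hmem] at hp
        rw [hval]
        constructor
        · rfl
        · show min l₁ l₂ - 1 - (p.1 : ℕ) = (p.2 : ℕ)
          omega)
      (by
        intro i hi
        show (⟨i, _⟩ : Fin l₁).val = i
        rfl)
    rw [this, card_range]
  · intro a ha b hb hab hle
    rw [hmem] at ha hb
    obtain ⟨hle1, hle2⟩ := hle
    rw [Fin.le_def] at hle1 hle2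
    exact hab ((hval a b).2 (by omega))
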